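/- Let B be a Banach algebra over ℝ, let W₀, W₁, …, W_k ∈ B satisfy W₀·W_i − W_i·W₀ = α_i • W_i for i = 1, …, k with constants α_i ∈ ℝ, and let a₀, a₁, …, a_k ∈ ℝ. Define R₀(λ) = exp(−λ a₀ W₀)·exp(λ ∑_{i=0}^{k} a_i W_i) for λ ∈ ℝ. Then R₀(λ) is invertible for every λ, the map λ ↦ R₀(λ) is differentiable, and (d/dλ R₀(λ))·R₀(λ)^{−1} = ∑_{i=1}^{k} a_i · exp(−α_i λ a₀) • W_i, where exp(−α_i λ a₀) is the real exponential. -/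

import Mathlib

open NormedSpace

lemma exp_semiconj {B : Type*} [NormedRing B] [NormedAlgebra ℝ B] [CompleteSpace B]
    {x y b : B} (h : x * b = b * y) : exp x * b = b * exp y := by
  have hpow : ∀ n : ℕ, x ^ n * b = b * y ^ n := by
    intro n
    induction n with
    | zero => simp
    | succ n ih => rw [pow_succ, pow_succ, mul_assoc, h, ← mul_assoc, ih, mul_assoc]
  simp only [exp_eq_tsum ℝ]
  rw [← (expSeries_summable' (𝕂 := ℝ) x).tsum_mul_right,
    ← (expSeries_summable' (𝕂 := ℝ) y).tsum_mul_left]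
  congr 1
  ext n
  rw [smul_mul_assoc, mul_smul_comm, hpow]


/-- In a real Banach algebra, let `W₀, W₁, …, W_k` satisfy `W₀·W_i - W_i·W₀ = α_i • W_i`
for `i = 1, …, k`, let `a₀, …, a_k ∈ ℝ`, and let
`R₀(λ) = exp(-λ a₀ W₀)·exp(λ ∑_{i=0}^{k} a_i W_i)`. Then `R₀(λ)` is invertible,
`λ ↦ R₀(λ)` is differentiable, and
`R₀'(λ)·R₀(λ)⁻¹ = ∑_{i=1}^{k} a_i e^{-α_i λ a₀} • W_i`. -/
theorem log_deriv_R0 {B : Type*} [NormedRing B] [NormedAlgebra ℝ B] [CompleteSpace B]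
    (k : ℕ) (W : ℕ → B) (α : ℕ → ℝ)
    (hW : ∀ i, 1 ≤ i → i ≤ k → W 0 * W i - W i * W 0 = α i • W i)
    (a : ℕ → ℝ) (R₀ : ℝ → B)
    (hR₀ : ∀ s : ℝ, R₀ s = NormedSpace.exp (-((s * a 0) • W 0)) *
      NormedSpace.exp (s • ∑ i ∈ Finset.range (k + 1), a i • W i)) :
    ∀ s : ℝ,
      IsUnit (R₀ s) ∧
      DifferentiableAt ℝ R₀ s ∧
      deriv R₀ s * Ring.inverse (R₀ s)
        = ∑ i ∈ Finset.Icc 1 k, (a i * Real.exp (-(α i * s * a 0))) • W i := by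
  letI : NormedAlgebra ℚ B := .restrictScalars ℚ ℝ B
  intro s
  set A : B := a 0 • W 0 with hA
  set S : B := ∑ i ∈ Finset.range (k + 1), a i • W i with hS
  have hAW : ∀ i ∈ Finset.Icc 1 k, A * W i = W i * A + (α i * a 0) • W i := by
    intro i hi
    simp only [Finset.mem_Icc] at hi
    have h0 : W 0 * W i = W i * W 0 + α i • W i := by
      have := hW i hi.1 hi.2; linear_combination (norm := module) this
    rw [hA, smul_mul_assoc, h0, smul_add, smul_smul, mul_comm (a 0) (α i), mul_smul_comm]
  have hconj : ∀ (t : ℝ), ∀ i ∈ Finset.Icc 1 k,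
      exp (t • A) * W i = Real.exp (t * (α i * a 0)) • (W i * exp (t • A)) := by
    intro t i hi
    have hsemi : (t • A) * W i = W i * ((t • A) + (t * (α i * a 0)) • (1 : B)) := by
      rw [smul_mul_assoc, hAW i hi]
      simp [mul_add, smul_add, smul_smul, mul_smul_comm]
    rw [exp_semiconj hsemi,
      exp_add_of_commute (((Commute.one_right (t • A)).smul_right _))]
    have h1 : exp ((t * (α i * a 0)) • (1 : B)) = Real.exp (t * (α i * a 0)) • (1 : B) := by
      rw [← Algebra.algebraMap_eq_smul_one, ← algebraMap_exp_comm, ← Real.exp_eq_exp_ℝ,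
        Algebra.algebraMap_eq_smul_one]
    rw [h1, mul_smul_comm, mul_one, mul_smul_comm]
  have hrange : Finset.range (k + 1) = insert 0 (Finset.Icc 1 k) := by
    ext x; simp [Nat.lt_succ_iff]; omega
  have hSsplit : S = A + ∑ i ∈ Finset.Icc 1 k, a i • W i := by
    rw [hS, hrange, Finset.sum_insert (by simp)]
  have hR₀' : ∀ t : ℝ, R₀ t = exp (t • (-A)) * exp (t • S) := by
    intro t
    rw [hR₀ t]
    congr 2
    rw [hA]; module
  have hd : HasDerivAt R₀
      ((-A) * exp (s • (-A)) * exp (s • S) + exp (s • (-A)) * (exp (s • S) * S)) s := by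
    have h1 := hasDerivAt_exp_smul_const' (𝕂 := ℝ) (-A) s
    have h2 := hasDerivAt_exp_smul_const (𝕂 := ℝ) S s
    exact (h1.mul h2).congr_of_eventuallyEq (Filter.Eventually.of_forall hR₀')
  have hE1 : exp (s • (-A)) * exp (-(s • (-A))) = 1 := by
    rw [← exp_add_of_commute (Commute.refl _).neg_right, add_neg_cancel, exp_zero]
  have hE1' : exp (-(s • (-A))) * exp (s • (-A)) = 1 := by
    rw [← exp_add_of_commute (Commute.refl _).neg_left, neg_add_cancel, exp_zero]
  have hF1 : exp (s • S) * exp (-(s • S)) = 1 := by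
    rw [← exp_add_of_commute (Commute.refl _).neg_right, add_neg_cancel, exp_zero]
  have hF1' : exp (-(s • S)) * exp (s • S) = 1 := by
    rw [← exp_add_of_commute (Commute.refl _).neg_left, neg_add_cancel, exp_zero]
  have hinv1 : exp (s • (-A)) * exp (s • S) *
      (exp (-(s • S)) * exp (-(s • (-A)))) = 1 := by
    rw [mul_assoc, ← mul_assoc (exp (s • S)), hF1, one_mul, hE1]
  have hinv2 : (exp (-(s • S)) * exp (-(s • (-A)))) *
      (exp (s • (-A)) * exp (s • S)) = 1 := by
    rw [mul_assoc, ← mul_assoc (exp (-(s • (-A)))), hE1', one_mul, hF1']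
  set u : Bˣ := ⟨exp (s • (-A)) * exp (s • S), exp (-(s • S)) * exp (-(s • (-A))),
    hinv1, hinv2⟩ with hu
  have hRu : R₀ s = (u : B) := hR₀' s
  refine ⟨hRu ▸ u.isUnit, hd.differentiableAt, ?_⟩
  rw [hd.deriv, hRu, Ring.inverse_unit]
  show ((-A) * exp (s • (-A)) * exp (s • S) + exp (s • (-A)) * (exp (s • S) * S)) *
      (exp (-(s • S)) * exp (-(s • (-A)))) = _
  have hScomm : exp (s • S) * S = S * exp (s • S) :=
    (((Commute.refl S).smul_left s).exp_left).eq
  have hcancel : ∀ z : B, z * exp (s • S) * (exp (-(s • S)) * exp (-(s • (-A)))) =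
      z * exp (-(s • (-A))) := by
    intro z
    rw [mul_assoc, ← mul_assoc (exp (s • S)), hF1, one_mul]
  rw [hScomm, add_mul, ← mul_assoc (exp (s • (-A))) S (exp (s • S)), hcancel, hcancel,
    mul_assoc (-A), hE1, mul_one, hSsplit, mul_add, add_mul]
  have hAcomm : exp (s • (-A)) * A = A * exp (s • (-A)) :=
    ((((Commute.refl A).neg_right).smul_right s).exp_right).eq.symm
  rw [hAcomm, mul_assoc A, hE1, mul_one, Finset.mul_sum, Finset.sum_mul]
  have hEA : s • (-A) = (-s) • A := by rw [smul_neg, neg_smul]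
  have key : ∀ i ∈ Finset.Icc 1 k,
      exp (s • (-A)) * (a i • W i) * exp (-(s • (-A)))
        = (a i * Real.exp (-(α i * s * a 0))) • W i := by
    intro i hi
    rw [mul_smul_comm, smul_mul_assoc]
    rw [hEA, hconj (-s) i hi]
    rw [smul_mul_assoc, mul_assoc, ← hEA, hE1, mul_one, smul_smul]
    congr 2
    ring
  rw [Finset.sum_congr rfl key, neg_add_cancel_left]
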